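/- Let Y be a finite nonempty set, let π_inst be a strictly positive probability mass function on Y, let r : Y → ℝ, and define π_λ(y) = π_inst(y) exp(λ r(y))/Z_λ with Z_λ = ∑_{y'} π_inst(y') exp(λ r(y')), and R_λ = ∑_y π_λ(y) r(y). Fix μ ∈ ℝ and let π* = π_μ with R* = R_μ. Then the derivative with respect to λ of the function D(λ) = ∑_y π*(y) log(π*(y)/π_λ(y)) equals −(R* − R_λ). -/

import Mathlib

/-- KL derivative along the exponential family: Fix a target member
`π* = p μ` of the exponential family `p l y = πinst y * exp (l * r y) / Z l`, with target
accuracy `R* = R μ`.  Then the KL divergence `D l = ∑ y, p μ y * log (p μ y / p l y)`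
satisfies `d/dl D = -(R* - R l)`. -/
theorem stmt13 {Y : Type*} [Fintype Y] [Nonempty Y]
    (πinst : Y → ℝ) (hpos : ∀ y, 0 < πinst y) (hsum : ∑ y, πinst y = 1)
    (r : Y → ℝ)
    (Z : ℝ → ℝ) (hZ : ∀ l, Z l = ∑ y', πinst y' * Real.exp (l * r y'))
    (p : ℝ → Y → ℝ) (hp : ∀ l y, p l y = πinst y * Real.exp (l * r y) / Z l)
    (R : ℝ → ℝ) (hR : ∀ l, R l = ∑ y, p l y * r y)
    (μ : ℝ)
    (D : ℝ → ℝ) (hD : ∀ l, D l = ∑ y, p μ y * Real.log (p μ y / p l y)) :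
    ∀ l : ℝ, HasDerivAt D (-(R μ - R l)) l := by
  have hZpos : ∀ l, 0 < Z l := by
    intro l
    rw [hZ]
    exact Finset.sum_pos (fun y _ => mul_pos (hpos y) (Real.exp_pos _))
      Finset.univ_nonempty
  have hppos : ∀ l y, 0 < p l y := by
    intro l y
    rw [hp]
    exact div_pos (mul_pos (hpos y) (Real.exp_pos _)) (hZpos l)
  have hpsum : ∑ y, p μ y = 1 := by
    have h : ∑ y, p μ y = (∑ y, πinst y * Real.exp (μ * r y)) / Z μ := by
      rw [Finset.sum_div]
      exact Finset.sum_congr rfl fun y _ => hp μ y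
    rw [h, ← hZ, div_self (hZpos μ).ne']
  set A : ℝ := ∑ y, p μ y * (Real.log (p μ y) - Real.log (πinst y)) with hA
  have hDeq : ∀ l, D l = A - l * R μ + Real.log (Z l) := by
    intro l
    rw [hD]
    have key : ∀ y, p μ y * Real.log (p μ y / p l y)
        = p μ y * (Real.log (p μ y) - Real.log (πinst y))
          - p μ y * (l * r y) + p μ y * Real.log (Z l) := by
      intro y
      have h1 : Real.log (p μ y / p l y) = Real.log (p μ y) - Real.log (p l y) :=
        Real.log_div (hppos μ y).ne' (hppos l y).ne'
      have h2 : Real.log (p l y)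
          = Real.log (πinst y) + l * r y - Real.log (Z l) := by
        rw [hp, Real.log_div (mul_pos (hpos y) (Real.exp_pos _)).ne' (hZpos l).ne',
          Real.log_mul (hpos y).ne' (Real.exp_pos _).ne', Real.log_exp]
      rw [h1, h2]; ring
    rw [Finset.sum_congr rfl fun y _ => key y]
    rw [Finset.sum_add_distrib, Finset.sum_sub_distrib, ← Finset.sum_mul, hpsum, one_mul,
      ← hA]
    have h3 : ∑ y, p μ y * (l * r y) = l * R μ := by
      rw [hR, Finset.mul_sum]
      exact Finset.sum_congr rfl fun y _ => by ring
    rw [h3]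
  have hDfun : D = fun l => A - l * R μ + Real.log (Z l) := funext hDeq
  have hZfun : Z = fun l => ∑ y, πinst y * Real.exp (l * r y) := funext hZ
  intro l
  have hZ' : HasDerivAt Z (∑ y, πinst y * (r y * Real.exp (l * r y))) l := by
    rw [hZfun]
    apply HasDerivAt.fun_sum
    intro y _
    have he : HasDerivAt (fun l : ℝ => Real.exp (l * r y))
        (r y * Real.exp (l * r y)) l := by
      simpa [mul_comm] using ((hasDerivAt_id l).mul_const (r y)).exp
    exact he.const_mul (πinst y)
  have hRl : (∑ y, πinst y * (r y * Real.exp (l * r y))) / Z l = R l := by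
    rw [hR, Finset.sum_div]
    refine Finset.sum_congr rfl fun y _ => ?_
    rw [hp]; ring
  rw [hDfun]
  have h := ((hasDerivAt_const l A).sub ((hasDerivAt_id l).mul_const (R μ))).add
    (hZ'.log (hZpos l).ne')
  refine h.congr_deriv ?_
  rw [hRl]; ring
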